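/- For every integer n ≥ 1, B_{n-1} = sum over k from 1 to n of S(n,k) * (-1)^{k-1} * (k-1)! * H_k, where B_{n-1} is a Bernoulli number and H_k the k-th harmonic number. -/

import Mathlib

/-- Stirling numbers of the second kind. -/
def S2 : ℕ → ℕ → ℕ
  | 0, 0 => 1
  | 0, _ + 1 => 0
  | _ + 1, 0 => 0
  | n + 1, k + 1 => (k + 1) * S2 n (k + 1) + S2 n k

open Finset

lemma S2_zero_right : ∀ n, S2 n 0 = if n = 0 then 1 else 0
  | 0 => rfl
  | _ + 1 => rfl

lemma S2_eq_zero : ∀ n k, n < k → S2 n k = 0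
  | 0, _ + 1, _ => rfl
  | n + 1, k + 1, h => by
    have h' : n < k := Nat.lt_of_succ_lt_succ h
    simp [S2, S2_eq_zero n (k+1) (h'.trans (Nat.lt_succ_self k)), S2_eq_zero n k h']

lemma S2_one : ∀ n, S2 (n + 1) 1 = 1
  | 0 => rfl
  | n + 1 => by
    show (0+1) * S2 (n+1) (0+1) + S2 (n+1) 0 = 1
    rw [S2_zero_right]
    simp [S2_one n]

lemma binom_S2 (n : ℕ) : ∀ j, ∑ k ∈ range (n + 1), n.choose k * S2 k j = S2 (n + 1) (j + 1) := by
  induction n with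
  | zero => intro j; simp [S2, S2_eq_zero 0 (j+1) j.succ_pos]
  | succ n ih =>
    intro j
    have split : ∑ k ∈ range (n + 2), (n+1).choose k * S2 k j
        = S2 0 j + ∑ k ∈ range (n + 1), (n+1).choose (k+1) * S2 (k+1) j := by
      rw [Finset.sum_range_succ' _ (n+1)]
      simp [add_comm]
    have pascal : ∀ k, (n+1).choose (k+1) = n.choose k + n.choose (k+1) :=
      fun k => Nat.choose_succ_succ n k
    have step2 : ∑ k ∈ range (n + 1), (n+1).choose (k+1) * S2 (k+1) j
        = (∑ k ∈ range (n + 1), n.choose k * S2 (k+1) j)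
          + ∑ k ∈ range (n + 1), n.choose (k+1) * S2 (k+1) j := by
      rw [← Finset.sum_add_distrib]
      exact Finset.sum_congr rfl fun k _ => by rw [pascal k, add_mul]
    have shift : (∑ k ∈ range (n + 1), n.choose (k+1) * S2 (k+1) j) + S2 0 j
        = S2 (n + 1) (j + 1) := by
      have top : ∑ k ∈ range (n + 2), n.choose k * S2 k j
          = ∑ k ∈ range (n + 1), n.choose k * S2 k j := by
        rw [Finset.sum_range_succ, Nat.choose_succ_self, zero_mul, add_zero]
      rw [← ih j, ← top, Finset.sum_range_succ' _ (n+1)]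
      simp
    rw [split, step2]
    have key : S2 0 j + ((∑ k ∈ range (n + 1), n.choose k * S2 (k+1) j)
          + ∑ k ∈ range (n + 1), n.choose (k+1) * S2 (k+1) j)
        = (∑ k ∈ range (n + 1), n.choose k * S2 (k+1) j) + S2 (n + 1) (j + 1) := by
      omega
    rw [key]
    match j with
    | 0 =>
      have : ∑ k ∈ range (n + 1), n.choose k * S2 (k+1) 0 = 0 := by
        apply Finset.sum_eq_zero; intro k _; simp [S2_zero_right]
      rw [this, zero_add, S2_one, S2_one]
    | i + 1 =>
      have expand : ∑ k ∈ range (n + 1), n.choose k * S2 (k+1) (i+1)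
          = (i+1) * (∑ k ∈ range (n + 1), n.choose k * S2 k (i+1))
            + ∑ k ∈ range (n + 1), n.choose k * S2 k i := by
        rw [Finset.mul_sum, ← Finset.sum_add_distrib]
        apply Finset.sum_congr rfl; intro k _
        show n.choose k * ((i + 1) * S2 k (i+1) + S2 k i) = _
        ring
      rw [expand, ih (i+1), ih i]
      show _ = (i + 1 + 1) * S2 (n+1) (i+1+1) + S2 (n+1) (i+1)
      ring

noncomputable def dcoef (j : ℕ) : ℚ := (-1) ^ j * j.factorial / (j + 1)

noncomputable def RR (m : ℕ) : ℚ := ∑ j ∈ range (m + 1), dcoef j * S2 m j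

lemma dcoef_mul (j : ℕ) : dcoef j * (j + 1) = (-1) ^ j * j.factorial := by
  have : ((j : ℚ) + 1) ≠ 0 := by positivity
  rw [dcoef, div_mul_cancel₀ _ this]

lemma altsum (m : ℕ) :
    ∑ i ∈ range (m + 1), ((-1 : ℚ) ^ i * i.factorial) * S2 (m + 1) (i + 1)
      = if m = 0 then 1 else 0 := by
  induction m with
  | zero => norm_num [S2]
  | succ m ih =>
    rw [if_neg (Nat.succ_ne_zero m)]
    have expand : ∀ i, (S2 (m + 2) (i + 1) : ℚ)
        = (i + 1) * S2 (m + 1) (i + 1) + S2 (m + 1) i := by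
      intro i; show ((i + 1) * S2 (m+1) (i+1) + S2 (m+1) i : ℕ) = ((i:ℚ)+1) * _ + _
      push_cast; ring
    calc ∑ i ∈ range (m + 2), ((-1 : ℚ) ^ i * i.factorial) * S2 (m + 2) (i + 1)
        = ∑ i ∈ range (m + 2), (((-1 : ℚ) ^ i * i.factorial * (i + 1)) * S2 (m + 1) (i + 1)
            + ((-1 : ℚ) ^ i * i.factorial) * S2 (m + 1) i) := by
          apply Finset.sum_congr rfl; intro i _; rw [expand i]; ring
      _ = (∑ i ∈ range (m + 2), ((-1 : ℚ) ^ i * i.factorial * (i + 1)) * S2 (m + 1) (i + 1))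
            + ∑ i ∈ range (m + 2), ((-1 : ℚ) ^ i * i.factorial) * S2 (m + 1) i := by
          rw [Finset.sum_add_distrib]
      _ = (∑ i ∈ range (m + 1), ((-1 : ℚ) ^ i * i.factorial * (i + 1)) * S2 (m + 1) (i + 1))
            + ∑ i ∈ range (m + 1), ((-1 : ℚ) ^ (i + 1) * (i + 1).factorial) * S2 (m + 1) (i + 1) := by
          rw [Finset.sum_range_succ _ (m + 1), S2_eq_zero (m + 1) (m + 2) (Nat.lt_succ_self _),
            Finset.sum_range_succ' _ (m + 1)]
          simp [S2_zero_right]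
      _ = ∑ i ∈ range (m + 1), (((-1 : ℚ) ^ i * i.factorial * (i + 1))
            + ((-1 : ℚ) ^ (i + 1) * (i + 1).factorial)) * S2 (m + 1) (i + 1) := by
          rw [← Finset.sum_add_distrib]; apply Finset.sum_congr rfl; intro i _; ring
      _ = 0 := by
          apply Finset.sum_eq_zero; intro i _
          have : ((i + 1).factorial : ℚ) = (i + 1) * i.factorial := by
            rw [Nat.factorial_succ]; push_cast; ring
          rw [this]; ring

lemma RR_rec (m : ℕ) :
    ∑ k ∈ range (m + 1), (((m + 1).choose k : ℚ)) * RR k = if m = 0 then 1 else 0 := by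
  have hR : ∀ k ∈ range (m + 1), ((m + 1).choose k : ℚ) * RR k
      = ∑ j ∈ range (m + 2), ((m + 1).choose k : ℚ) * (dcoef j * S2 k j) := by
    intro k hk
    rw [Finset.mem_range] at hk
    rw [RR, Finset.mul_sum]
    apply Finset.sum_subset
    · intro x hx; rw [Finset.mem_range] at *; omega
    · intro x _ hx
      rw [Finset.mem_range, not_lt] at hx
      rw [S2_eq_zero k x (by omega)]
      simp
  rw [Finset.sum_congr rfl hR, Finset.sum_comm]
  have inner : ∀ j, ∑ k ∈ range (m + 1), ((m + 1).choose k : ℚ) * (dcoef j * S2 k j)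
      = dcoef j * ((S2 (m + 2) (j + 1) : ℚ) - S2 (m + 1) j) := by
    intro j
    have hb : (∑ k ∈ range (m + 2), ((m + 1).choose k) * S2 k j : ℕ) = S2 (m + 2) (j + 1) :=
      binom_S2 (m + 1) j
    have hb' : ∑ k ∈ range (m + 1), (((m + 1).choose k : ℚ)) * S2 k j
        = (S2 (m + 2) (j + 1) : ℚ) - S2 (m + 1) j := by
      have := congrArg (Nat.cast : ℕ → ℚ) hb
      push_cast at this
      rw [Finset.sum_range_succ] at this
      simp only [Nat.choose_self, Nat.cast_one, one_mul] at this
      linarith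
    calc ∑ k ∈ range (m + 1), ((m + 1).choose k : ℚ) * (dcoef j * S2 k j)
        = dcoef j * ∑ k ∈ range (m + 1), ((m + 1).choose k : ℚ) * S2 k j := by
          rw [Finset.mul_sum]; apply Finset.sum_congr rfl; intro k _; ring
      _ = _ := by rw [hb']
  rw [Finset.sum_congr rfl fun j _ => inner j]
  have term : ∀ j, dcoef j * ((S2 (m + 2) (j + 1) : ℚ) - S2 (m + 1) j)
      = ((-1 : ℚ) ^ j * j.factorial) * S2 (m + 1) (j + 1) := by
    intro j
    have expand : (S2 (m + 2) (j + 1) : ℚ) = (j + 1) * S2 (m + 1) (j + 1) + S2 (m + 1) j := by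
      show ((j + 1) * S2 (m+1) (j+1) + S2 (m+1) j : ℕ) = ((j:ℚ)+1) * _ + _
      push_cast; ring
    rw [expand]
    have := dcoef_mul j
    calc dcoef j * (((j : ℚ) + 1) * S2 (m + 1) (j + 1) + S2 (m + 1) j - S2 (m + 1) j)
        = (dcoef j * ((j : ℚ) + 1)) * S2 (m + 1) (j + 1) := by ring
      _ = _ := by rw [this]
  rw [Finset.sum_congr rfl fun j _ => term j, Finset.sum_range_succ,
    S2_eq_zero (m + 1) (m + 2) (Nat.lt_succ_self _)]
  simpa using altsum m

lemma bernoulli_eq_RR : ∀ m : ℕ, bernoulli m = RR m := by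
  intro m
  induction m using Nat.strong_induction_on with
  | _ m ih =>
    have h1 := sum_bernoulli (m + 1)
    have h2 := RR_rec m
    rw [Finset.sum_range_succ] at h1 h2
    have hifeq : (if m + 1 = 1 then (1:ℚ) else 0) = if m = 0 then 1 else 0 := by
      simp
    rw [hifeq] at h1
    have hsame : ∑ k ∈ range m, ((m + 1).choose k : ℚ) * bernoulli k
        = ∑ k ∈ range m, ((m + 1).choose k : ℚ) * RR k := by
      apply Finset.sum_congr rfl; intro k hk
      rw [Finset.mem_range] at hk
      rw [ih k hk]
    rw [hsame] at h1
    have hc : (((m + 1).choose m : ℚ)) ≠ 0 := by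
      simp [Nat.choose_succ_self_right]
      positivity
    have : ((m + 1).choose m : ℚ) * bernoulli m = ((m + 1).choose m : ℚ) * RR m := by
      linarith [h1, h2]
    exact mul_left_cancel₀ hc this

theorem bernoulli_eq_stirling2_harmonic (n : ℕ) (hn : 1 ≤ n) :
    bernoulli (n - 1) =
      ∑ k ∈ Finset.Icc 1 n,
        (S2 n k : ℚ) * (-1) ^ (k - 1) * (Nat.factorial (k - 1)) * harmonic k := by
  obtain ⟨m, rfl⟩ : ∃ m, n = m + 1 := ⟨n - 1, by omega⟩
  simp only [Nat.add_sub_cancel]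
  rw [bernoulli_eq_RR]
  have hreindex : ∑ k ∈ Finset.Icc 1 (m + 1),
        (S2 (m + 1) k : ℚ) * (-1) ^ (k - 1) * (Nat.factorial (k - 1)) * harmonic k
      = ∑ i ∈ range (m + 1),
        (S2 (m + 1) (i + 1) : ℚ) * (-1) ^ i * (Nat.factorial i) * harmonic (i + 1) := by
    rw [← Finset.Ico_add_one_right_eq_Icc, Finset.sum_Ico_eq_sum_range]
    simp only [show m + 1 + 1 - 1 = m + 1 from rfl]
    apply Finset.sum_congr rfl
    intro i _
    rw [Nat.add_comm 1 i, Nat.add_sub_cancel]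
  rw [hreindex]
  set F : ℕ → ℚ := fun i => (-1 : ℚ) ^ i * (Nat.factorial i) * harmonic (i + 1) with hF
  have expand : ∀ i, (S2 (m + 1) (i + 1) : ℚ) = (i + 1) * S2 m (i + 1) + S2 m i := by
    intro i; show ((i + 1) * S2 m (i+1) + S2 m i : ℕ) = ((i:ℚ)+1) * _ + _
    push_cast; ring
  have key : ∀ i : ℕ, ((i : ℚ) + 1) * F i + F (i + 1) = dcoef (i + 1) := by
    intro i
    have h2 : ((i : ℚ) + 2) ≠ 0 := by positivity
    rw [hF]
    simp only [harmonic_succ (i + 1)]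
    rw [dcoef]
    have hfac : ((i + 1).factorial : ℚ) = (i + 1) * i.factorial := by
      rw [Nat.factorial_succ]; push_cast; ring
    rw [hfac]
    push_cast
    field_simp
    ring
  calc RR m
      = dcoef 0 * S2 m 0 + ∑ i ∈ range m, dcoef (i + 1) * S2 m (i + 1) := by
        rw [RR, Finset.sum_range_succ' _ m]; ring
    _ = F 0 * S2 m 0 + ∑ i ∈ range m, (((i : ℚ) + 1) * F i + F (i + 1)) * S2 m (i + 1) := by
        have hF0 : F 0 = dcoef 0 := by simp [hF, dcoef]
        rw [hF0]
        congr 1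
        apply Finset.sum_congr rfl
        intro i _
        rw [key i]
    _ = (∑ i ∈ range (m + 1), ((i : ℚ) + 1) * S2 m (i + 1) * F i)
          + ∑ i ∈ range (m + 1), (S2 m i : ℚ) * F i := by
        rw [Finset.sum_range_succ _ m, S2_eq_zero m (m + 1) (Nat.lt_succ_self _),
          Finset.sum_range_succ' (fun i => (S2 m i : ℚ) * F i) m]
        push_cast
        have hsum : ∑ i ∈ range m, (((i : ℚ) + 1) * F i + F (i + 1)) * S2 m (i + 1)
            = (∑ i ∈ range m, ((i : ℚ) + 1) * S2 m (i + 1) * F i)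
              + ∑ i ∈ range m, (S2 m (i + 1) : ℚ) * F (i + 1) := by
          rw [← Finset.sum_add_distrib]
          apply Finset.sum_congr rfl; intro i _; ring
        rw [hsum]
        ring
    _ = ∑ i ∈ range (m + 1),
          (S2 (m + 1) (i + 1) : ℚ) * (-1) ^ i * (Nat.factorial i) * harmonic (i + 1) := by
        rw [← Finset.sum_add_distrib]
        apply Finset.sum_congr rfl
        intro i _
        rw [expand i, hF]
        ring
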